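/- (Main theorem, part (i): membership in the Dixmier ideal.) Let α > 0, let φ : Σ_A⁺ → ℝ be α-Hölder with −φ normalized and φ(x) > 0 for all x, and let f : Σ_A⁺ → ℝ be continuous with f ≥ 0 and f not identically 0. Define e : W* × {1,2} → ℝ by e(w,1) = f(w y^{t(w)}) e^{−φ^{|w|}(w x^{t(w)})} and e(w,2) = f(w z^{t(w)}) e^{−φ^{|w|}(w x^{t(w)})} (these are the eigenvalues of π(f)|D_φ|^{−1}), and let a : {1,2,3,…} → ℝ be a nonincreasing enumeration of the family e, i.e. a_n = e(β(n)) for a bijection β with a₁ ≥ a₂ ≥ a₃ ≥ ⋯ (such an enumeration exists since e(w,i) → 0 as |w| → ∞). Then limsup_{n→∞} (1/log n) Σ_{m=1}^n a_m < ∞. -/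

import Mathlib

open scoped BigOperators Classical
open Filter Topology MeasureTheory

namespace SpectralGibbs

/-- The one-sided shift space `Σ_A⁺` determined by a `k × k` zero-one matrix `A`. -/
abbrev ShiftSpace (k : ℕ) (A : Matrix (Fin k) (Fin k) ℕ) : Type :=
  {x : ℕ → Fin k // ∀ m : ℕ, A (x m) (x (m + 1)) = 1}

/-- `A` has entries in `{0,1}`. -/
def ZeroOne (k : ℕ) (A : Matrix (Fin k) (Fin k) ℕ) : Prop :=
  ∀ i j : Fin k, A i j = 0 ∨ A i j = 1

/-- `A` is aperiodic: some power of `A` has all entries positive. -/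
def Aperiodic (k : ℕ) (A : Matrix (Fin k) (Fin k) ℕ) : Prop :=
  ∃ n : ℕ, 1 ≤ n ∧ ∀ i j : Fin k, 0 < (A ^ n) i j

/-- The shift map `σ`. -/
def shift (k : ℕ) (A : Matrix (Fin k) (Fin k) ℕ) :
    ShiftSpace k A → ShiftSpace k A :=
  fun x => ⟨fun m => x.1 (m + 1), fun m => x.2 (m + 1)⟩

/-- The metric `d(x,y) = 2^{-min{m : x_m ≠ y_m}}` for `x ≠ y` (and `0` for `x = y`). -/
noncomputable def dist' (k : ℕ) (A : Matrix (Fin k) (Fin k) ℕ)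
    (x y : ShiftSpace k A) : ℝ :=
  if x = y then 0 else (2 : ℝ)⁻¹ ^ sInf {m : ℕ | x.1 m ≠ y.1 m}

/-- `f` is `α`-Hölder: `sup_{x ≠ y} ‖f x - f y‖ / d(x,y)^α < ∞`. -/
def IsHolder {E : Type*} [NormedAddCommGroup E] (k : ℕ) (A : Matrix (Fin k) (Fin k) ℕ)
    (α : ℝ) (f : ShiftSpace k A → E) : Prop :=
  ∃ C : ℝ, ∀ x y : ShiftSpace k A, ‖f x - f y‖ ≤ C * dist' k A x y ^ α

/-- The sequence `ix` obtained by prepending the symbol `i` to a sequence `x`. -/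
def consSeq (k : ℕ) (i : Fin k) (x : ℕ → Fin k) : ℕ → Fin k
  | 0 => i
  | m + 1 => x m

/-- The point `ix ∈ Σ_A⁺`, defined whenever `A(i, x_0) = 1`. -/
def cons (k : ℕ) (A : Matrix (Fin k) (Fin k) ℕ) (i : Fin k) (x : ShiftSpace k A)
    (h : A i (x.1 0) = 1) : ShiftSpace k A :=
  ⟨consSeq k i x.1, by
    intro m
    match m with
    | 0 => exact h
    | m + 1 => exact x.2 m⟩

/-- The transfer operator `(L_ψ g)(x) = Σ_{σ y = x} e^{ψ(y)} g(y)`. -/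
noncomputable def transfer {E : Type*} [AddCommMonoid E] [SMul ℝ E]
    (k : ℕ) (A : Matrix (Fin k) (Fin k) ℕ)
    (ψ : ShiftSpace k A → ℝ) (g : ShiftSpace k A → E) (x : ShiftSpace k A) : E :=
  ∑ i : Fin k,
    if h : A i (x.1 0) = 1 then Real.exp (ψ (cons k A i x h)) • g (cons k A i x h) else 0

/-- `-φ` is normalized: `Σ_{σ y = x} e^{-φ(y)} = 1` for all `x`. -/
def NormalizedNeg (k : ℕ) (A : Matrix (Fin k) (Fin k) ℕ) (φ : ShiftSpace k A → ℝ) : Prop :=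
  ∀ x : ShiftSpace k A, transfer k A (fun y => -φ y) (fun _ => (1 : ℝ)) x = 1

/-- Birkhoff sum `φ^n = φ + φ∘σ + ⋯ + φ∘σ^{n-1}`. -/
noncomputable def birk (k : ℕ) (A : Matrix (Fin k) (Fin k) ℕ)
    (φ : ShiftSpace k A → ℝ) (n : ℕ) (x : ShiftSpace k A) : ℝ :=
  ∑ i ∈ Finset.range n, φ ((shift k A)^[i] x)

/-- A word `w = (w_1, …, w_{n+1})` (of length `n+1 ≥ 1`) is allowed if consecutive
letters are compatible with `A`. -/
def Allowed (k : ℕ) (A : Matrix (Fin k) (Fin k) ℕ) {n : ℕ} (w : Fin (n + 1) → Fin k) : Prop :=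
  ∀ i : Fin n, A (w i.castSucc) (w i.succ) = 1

/-- `W*`: the set of all allowed finite words (of length `≥ 1`). -/
def Words (k : ℕ) (A : Matrix (Fin k) (Fin k) ℕ) : Type :=
  Σ n : ℕ, {w : Fin (n + 1) → Fin k // Allowed k A w}

/-- The length `|w|` of a word. -/
def wordLen (k : ℕ) (A : Matrix (Fin k) (Fin k) ℕ) (w : Words k A) : ℕ := w.1 + 1

/-- The last letter `t(w)` of a word. -/
def wordLast (k : ℕ) (A : Matrix (Fin k) (Fin k) ℕ) (w : Words k A) : Fin k :=
  w.2.1 (Fin.last w.1)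

/-- The concatenated sequence `w x`. -/
def wordSeq (k : ℕ) {n : ℕ} (w : Fin (n + 1) → Fin k) (x : ℕ → Fin k) : ℕ → Fin k :=
  fun m => if h : m < n + 1 then w ⟨m, h⟩ else x (m - (n + 1))

theorem glue_mem (k : ℕ) (A : Matrix (Fin k) (Fin k) ℕ) {n : ℕ}
    (w : Fin (n + 1) → Fin k) (hw : Allowed k A w) (x : ShiftSpace k A)
    (hx : A (w (Fin.last n)) (x.1 0) = 1) :
    ∀ m : ℕ, A (wordSeq k w x.1 m) (wordSeq k w x.1 (m + 1)) = 1 := by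
  intro m
  unfold wordSeq
  rcases lt_trichotomy (m + 1) (n + 1) with h | h | h
  · have hm : m < n + 1 := by omega
    rw [dif_pos hm, dif_pos h]
    exact hw ⟨m, by omega⟩
  · have hm : m < n + 1 := by omega
    rw [dif_pos hm, dif_neg (by omega)]
    have h0 : m + 1 - (n + 1) = 0 := by omega
    rw [h0]
    have hl : (⟨m, hm⟩ : Fin (n + 1)) = Fin.last n := by
      apply Fin.ext
      simp only [Fin.last]
      omega
    rw [hl]
    exact hx
  · rw [dif_neg (by omega), dif_neg (by omega)]
    have h1 : m + 1 - (n + 1) = (m - (n + 1)) + 1 := by omega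
    rw [h1]
    exact x.2 (m - (n + 1))

/-- The point `w x ∈ Σ_A⁺`, for an allowed word `w` and `x` with `A(t(w), x_0) = 1`. -/
def glue (k : ℕ) (A : Matrix (Fin k) (Fin k) ℕ) {n : ℕ}
    (w : Fin (n + 1) → Fin k) (hw : Allowed k A w) (x : ShiftSpace k A)
    (hx : A (w (Fin.last n)) (x.1 0) = 1) : ShiftSpace k A :=
  ⟨wordSeq k w x.1, glue_mem k A w hw x hx⟩

/-- Given a family of points `p j` with `A(j, (p j)_0) = 1`, the point `w p^{t(w)}`. -/
def wordPt (k : ℕ) (A : Matrix (Fin k) (Fin k) ℕ) {n : ℕ}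
    (w : Fin (n + 1) → Fin k) (hw : Allowed k A w)
    (p : Fin k → ShiftSpace k A) (hp : ∀ j : Fin k, A j ((p j).1 0) = 1) : ShiftSpace k A :=
  glue k A w hw (p (w (Fin.last n))) (hp _)

/-- The point `w p^{t(w)}` for `w ∈ W*`. -/
def wpt (k : ℕ) (A : Matrix (Fin k) (Fin k) ℕ)
    (p : Fin k → ShiftSpace k A) (hp : ∀ j : Fin k, A j ((p j).1 0) = 1)
    (w : Words k A) : ShiftSpace k A :=
  wordPt k A w.2.1 w.2.2 p hp

/-- The indicator function `χ_j` of the cylinder `[j] = {x : x_0 = j}`. -/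
noncomputable def cylInd (k : ℕ) (A : Matrix (Fin k) (Fin k) ℕ) (j : Fin k) :
    ShiftSpace k A → ℝ :=
  fun x => if x.1 0 = j then 1 else 0


/-- The eigenvalue family of `π(f)|D_φ|⁻¹`, indexed by `W* × {1,2}`. -/
noncomputable def eigval (k : ℕ) (A : Matrix (Fin k) (Fin k) ℕ)
    (xp : Fin k → ShiftSpace k A) (hxp : ∀ j : Fin k, A j ((xp j).1 0) = 1)
    (yp : Fin k → ShiftSpace k A) (hyp : ∀ j : Fin k, A j ((yp j).1 0) = 1)
    (zp : Fin k → ShiftSpace k A) (hzp : ∀ j : Fin k, A j ((zp j).1 0) = 1)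
    (φ f : ShiftSpace k A → ℝ) : Words k A × Fin 2 → ℝ :=
  fun p =>
    (if p.2 = 0 then f (wpt k A yp hyp p.1) else f (wpt k A zp hzp p.1)) *
      Real.exp (-(birk k A φ (wordLen k A p.1) (wpt k A xp hxp p.1)))

/- ### Auxiliary lemmas -/

section Aux

variable (k : ℕ) (A : Matrix (Fin k) (Fin k) ℕ)

lemma shift_cons (i : Fin k) (x : ShiftSpace k A) (h : A i (x.1 0) = 1) :
    shift k A (cons k A i x h) = x :=
  Subtype.ext (funext fun _ => rfl)

lemma birk_succ (φ : ShiftSpace k A → ℝ) (n : ℕ) (x : ShiftSpace k A) :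
    birk k A φ (n + 1) x = φ x + birk k A φ n (shift k A x) := by
  unfold birk
  rw [Finset.sum_range_succ']
  simp only [Function.iterate_succ_apply, Function.iterate_zero_apply]
  ring

lemma birk_cons (φ : ShiftSpace k A → ℝ) (n : ℕ) (i : Fin k) (x : ShiftSpace k A)
    (h : A i (x.1 0) = 1) :
    birk k A φ (n + 1) (cons k A i x h) = φ (cons k A i x h) + birk k A φ n x := by
  rw [birk_succ, shift_cons]

lemma birk_ge (φ : ShiftSpace k A → ℝ) (c : ℝ) (hc : ∀ x, c ≤ φ x) (n : ℕ)
    (x : ShiftSpace k A) : c * n ≤ birk k A φ n x := by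
  unfold birk
  calc c * n = ∑ _i ∈ Finset.range n, c := by
        rw [Finset.sum_const, Finset.card_range, nsmul_eq_mul, mul_comm]
    _ ≤ _ := Finset.sum_le_sum fun i _ => hc _

lemma glue_head {n : ℕ} (w : Fin (n + 1) → Fin k) (hw : Allowed k A w)
    (x : ShiftSpace k A) (hx : A (w (Fin.last n)) (x.1 0) = 1) :
    (glue k A w hw x hx).1 0 = w 0 := by
  show wordSeq k w x.1 0 = w 0
  unfold wordSeq
  rw [dif_pos (Nat.succ_pos n)]
  rfl

lemma cons_last {n : ℕ} (i : Fin k) (w : Fin (n + 1) → Fin k) :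
    (Fin.cons i w : Fin (n + 2) → Fin k) (Fin.last (n + 1)) = w (Fin.last n) := by
  rw [← Fin.succ_last, Fin.cons_succ]

lemma allowed_cons_iff {n : ℕ} (i : Fin k) (w : Fin (n + 1) → Fin k) :
    Allowed k A (Fin.cons i w) ↔ A i (w 0) = 1 ∧ Allowed k A w := by
  unfold Allowed
  rw [Fin.forall_fin_succ]
  constructor
  · rintro ⟨h0, hs⟩
    constructor
    · simpa using h0
    · intro j
      have := hs j
      simpa [← Fin.succ_castSucc, Fin.cons_succ] using this
  · rintro ⟨h0, hs⟩
    constructor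
    · simpa using h0
    · intro j
      have := hs j
      simpa [← Fin.succ_castSucc, Fin.cons_succ] using this

lemma glue_zero_eq (w : Fin 1 → Fin k) (hw : Allowed k A w) (x : ShiftSpace k A)
    (hx : A (w (Fin.last 0)) (x.1 0) = 1) (hx0 : A (w 0) (x.1 0) = 1) :
    glue k A w hw x hx = cons k A (w 0) x hx0 := by
  apply Subtype.ext
  funext m
  show wordSeq k w x.1 m = consSeq k (w 0) x.1 m
  match m with
  | 0 =>
    unfold wordSeq
    rw [dif_pos Nat.one_pos]
    rfl
  | m + 1 =>
    unfold wordSeq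
    rw [dif_neg (by omega)]
    rfl

lemma glue_cons_eq {n : ℕ} (i : Fin k) (w : Fin (n + 1) → Fin k)
    (hw : Allowed k A (Fin.cons i w)) (x : ShiftSpace k A)
    (hx : A ((Fin.cons i w : Fin (n + 2) → Fin k) (Fin.last (n + 1))) (x.1 0) = 1)
    (hw' : Allowed k A w) (hx' : A (w (Fin.last n)) (x.1 0) = 1)
    (hi : A i ((glue k A w hw' x hx').1 0) = 1) :
    glue k A (Fin.cons i w) hw x hx = cons k A i (glue k A w hw' x hx') hi := by
  apply Subtype.ext
  funext m
  show wordSeq k (Fin.cons i w) x.1 m = consSeq k i (wordSeq k w x.1) m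
  match m with
  | 0 =>
    unfold wordSeq
    rw [dif_pos (by omega : 0 < n + 2)]
    have h0 : (⟨0, by omega⟩ : Fin (n + 2)) = 0 := by
      apply Fin.ext; rfl
    rw [h0, Fin.cons_zero]
    rfl
  | m + 1 =>
    show wordSeq k (Fin.cons i w) x.1 (m + 1) = wordSeq k w x.1 m
    unfold wordSeq
    by_cases hm : m < n + 1
    · rw [dif_pos (by omega : m + 1 < n + 2), dif_pos hm]
      have : (⟨m + 1, by omega⟩ : Fin (n + 2)) = Fin.succ ⟨m, hm⟩ := rfl
      rw [this, Fin.cons_succ]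
    · rw [dif_neg (by omega), dif_neg hm]
      have : m + 1 - (n + 1 + 1) = m - (n + 1) := by omega
      rw [this]

noncomputable def wsum (φ : ShiftSpace k A → ℝ) (n : ℕ) (x : ShiftSpace k A) : ℝ :=
  ∑ w : Fin (n + 1) → Fin k,
    if h : Allowed k A w ∧ A (w (Fin.last n)) (x.1 0) = 1 then
      Real.exp (-birk k A φ (n + 1) (glue k A w h.1 x h.2)) else 0

lemma hnorm' (φ : ShiftSpace k A → ℝ) (hnorm : NormalizedNeg k A φ) (x : ShiftSpace k A) :
    ∑ i : Fin k, (if h : A i (x.1 0) = 1 then Real.exp (-φ (cons k A i x h)) else 0) = 1 := by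
  have h := hnorm x
  unfold transfer at h
  simpa [smul_eq_mul] using h

lemma birk_one (φ : ShiftSpace k A → ℝ) (x : ShiftSpace k A) :
    birk k A φ 1 x = φ x := by
  unfold birk; simp

lemma wsum_eq_one (φ : ShiftSpace k A → ℝ) (hnorm : NormalizedNeg k A φ) :
    ∀ (n : ℕ) (x : ShiftSpace k A), wsum k A φ n x = 1 := by
  intro n
  induction n with
  | zero =>
    intro x
    unfold wsum
    rw [← hnorm' k A φ hnorm x]
    apply Fintype.sum_equiv (Equiv.funUnique (Fin 1) (Fin k))
    intro w
    have hall : Allowed k A w := fun j => j.elim0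
    have hdef : Equiv.funUnique (Fin 1) (Fin k) w = w 0 := rfl
    have hlast : w (Fin.last 0) = w 0 := rfl
    rw [hdef]
    by_cases hA : A (w 0) (x.1 0) = 1
    · rw [dif_pos ⟨hall, by rw [hlast]; exact hA⟩, dif_pos hA]
      rw [glue_zero_eq k A w hall x _ hA, birk_one]
    · rw [dif_neg, dif_neg hA]
      rintro ⟨-, h2⟩
      exact hA (by rwa [hlast] at h2)
  | succ n IH =>
    intro x
    unfold wsum
    have hre : ∑ p : Fin k × (Fin (n + 1) → Fin k),
        (if h : Allowed k A (Fin.cons p.1 p.2) ∧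
            A ((Fin.cons p.1 p.2 : Fin (n + 2) → Fin k) (Fin.last (n + 1))) (x.1 0) = 1 then
          Real.exp (-birk k A φ (n + 2) (glue k A (Fin.cons p.1 p.2) h.1 x h.2)) else 0) =
        ∑ w : Fin (n + 2) → Fin k,
          (if h : Allowed k A w ∧ A (w (Fin.last (n + 1))) (x.1 0) = 1 then
            Real.exp (-birk k A φ (n + 2) (glue k A w h.1 x h.2)) else 0) := by
      apply Fintype.sum_equiv (Fin.consEquiv (fun _ : Fin (n + 2) => Fin k))
      intro p
      rfl
    rw [← hre, Fintype.sum_prod_type, Finset.sum_comm]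
    have key : ∀ w' : Fin (n + 1) → Fin k,
        (∑ i : Fin k,
          (if h : Allowed k A (Fin.cons i w') ∧
              A ((Fin.cons i w' : Fin (n + 2) → Fin k) (Fin.last (n + 1))) (x.1 0) = 1 then
            Real.exp (-birk k A φ (n + 2) (glue k A (Fin.cons i w') h.1 x h.2)) else 0)) =
        (if h : Allowed k A w' ∧ A (w' (Fin.last n)) (x.1 0) = 1 then
          Real.exp (-birk k A φ (n + 1) (glue k A w' h.1 x h.2)) else 0) := by
      intro w'
      by_cases hc : Allowed k A w' ∧ A (w' (Fin.last n)) (x.1 0) = 1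
      · rw [dif_pos hc]
        set y := glue k A w' hc.1 x hc.2 with hy
        have hy0 : y.1 0 = w' 0 := glue_head k A w' hc.1 x hc.2
        have step : ∀ i : Fin k,
            (if h : Allowed k A (Fin.cons i w') ∧
                A ((Fin.cons i w' : Fin (n + 2) → Fin k) (Fin.last (n + 1))) (x.1 0) = 1 then
              Real.exp (-birk k A φ (n + 2) (glue k A (Fin.cons i w') h.1 x h.2)) else 0) =
            (if h : A i (y.1 0) = 1 then Real.exp (-φ (cons k A i y h)) else 0) *
              Real.exp (-birk k A φ (n + 1) y) := by
          intro i
          by_cases hi : A i (y.1 0) = 1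
          · have hiw : A i (w' 0) = 1 := by rwa [hy0] at hi
            have hcc : Allowed k A (Fin.cons i w') ∧
                A ((Fin.cons i w' : Fin (n + 2) → Fin k) (Fin.last (n + 1))) (x.1 0) = 1 :=
              ⟨(allowed_cons_iff k A i w').2 ⟨hiw, hc.1⟩, by rw [cons_last]; exact hc.2⟩
            rw [dif_pos hcc, dif_pos hi]
            rw [glue_cons_eq k A i w' hcc.1 x hcc.2 hc.1 hc.2 hi]
            rw [birk_cons, neg_add, Real.exp_add]
          · rw [dif_neg, dif_neg hi, zero_mul]
            rintro ⟨ha, -⟩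
            exact hi (by rw [hy0]; exact ((allowed_cons_iff k A i w').1 ha).1)
        rw [Finset.sum_congr rfl (fun i _ => step i), ← Finset.sum_mul,
          hnorm' k A φ hnorm y, one_mul]
      · rw [dif_neg hc]
        apply Finset.sum_eq_zero
        intro i _
        rw [dif_neg]
        rintro ⟨ha, hl⟩
        exact hc ⟨((allowed_cons_iff k A i w').1 ha).2, by rwa [cons_last] at hl⟩
    rw [Finset.sum_congr rfl (fun w' _ => key w')]
    exact IH x

lemma sum_dite_subtype {α : Type*} [Fintype α] (p : α → Prop) (g : {a // p a} → ℝ) :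
    (∑ a : α, if h : p a then g ⟨a, h⟩ else 0) = ∑ a : {a // p a}, g a := by
  classical
  have h1 : ∀ x, x ∈ Finset.univ.filter p ↔ p x := by simp
  rw [← Finset.sum_subset (Finset.filter_subset p Finset.univ)
      (fun x _ hx => dif_neg (by simpa using hx))]
  rw [Finset.sum_subtype _ h1 (fun a => if h : p a then g ⟨a, h⟩ else 0)]
  exact Finset.sum_congr rfl fun a _ => by rw [dif_pos a.2]

lemma dist'_nonneg (x y : ShiftSpace k A) : 0 ≤ dist' k A x y := by
  unfold dist'
  split
  · exact le_refl 0
  · positivity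

instance shiftCompact : CompactSpace (ShiftSpace k A) := by
  have hclosed : IsClosed {x : ℕ → Fin k | ∀ m : ℕ, A (x m) (x (m + 1)) = 1} := by
    have hset : {x : ℕ → Fin k | ∀ m : ℕ, A (x m) (x (m + 1)) = 1} =
        ⋂ m : ℕ, {x : ℕ → Fin k | A (x m) (x (m + 1)) = 1} := by
      ext x; simp
    rw [hset]
    apply isClosed_iInter
    intro m
    have hcont : Continuous fun x : ℕ → Fin k => (x m, x (m + 1)) :=
      (continuous_apply m).prodMk (continuous_apply (m + 1))
    exact (isClosed_discrete {p : Fin k × Fin k | A p.1 p.2 = 1}).preimage hcont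
  exact isCompact_iff_compactSpace.mp hclosed.isCompact

lemma holder_continuous {γ : ℝ} (hγ : 0 < γ) (φ : ShiftSpace k A → ℝ)
    (hH : IsHolder k A γ φ) : Continuous φ := by
  obtain ⟨C, hC⟩ := hH
  set C' : ℝ := max C 0 with hC'def
  have hC'0 : 0 ≤ C' := le_max_right _ _
  have hC' : ∀ x y, |φ x - φ y| ≤ C' * dist' k A x y ^ γ := by
    intro x y
    calc |φ x - φ y| = ‖φ x - φ y‖ := (Real.norm_eq_abs _).symm
      _ ≤ C * dist' k A x y ^ γ := hC x y
      _ ≤ C' * dist' k A x y ^ γ :=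
        mul_le_mul_of_nonneg_right (le_max_left _ _)
          (Real.rpow_nonneg (dist'_nonneg k A x y) γ)
  rw [continuous_iff_continuousAt]
  intro x
  rw [ContinuousAt, Metric.tendsto_nhds]
  intro ε hε
  have hr1 : (2 : ℝ)⁻¹ ^ γ < 1 := Real.rpow_lt_one (by norm_num) (by norm_num) hγ
  have hr0 : (0 : ℝ) ≤ (2 : ℝ)⁻¹ ^ γ := Real.rpow_nonneg (by norm_num) γ
  have htend : Tendsto (fun m : ℕ => C' * ((2 : ℝ)⁻¹ ^ γ) ^ m) atTop (nhds 0) := by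
    have h2 := tendsto_pow_atTop_nhds_zero_of_lt_one hr0 hr1
    simpa using h2.const_mul C'
  obtain ⟨m, hm⟩ := (htend.eventually (gt_mem_nhds hε)).exists
  have hnb : ∀ᶠ y : ShiftSpace k A in nhds x, ∀ i ∈ Finset.range m, y.1 i = x.1 i := by
    rw [eventually_all_finset]
    intro i _
    have hco : Continuous fun y : ShiftSpace k A => y.1 i :=
      (continuous_apply i).comp continuous_subtype_val
    have hopen : IsOpen {y : ShiftSpace k A | y.1 i = x.1 i} :=
      (isOpen_discrete {j : Fin k | j = x.1 i}).preimage hco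
    exact hopen.mem_nhds rfl
  filter_upwards [hnb] with y hy
  rw [Real.dist_eq]
  by_cases hxy : y = x
  · subst hxy; simpa using hε
  · have hne : {j : ℕ | y.1 j ≠ x.1 j}.Nonempty := by
      have hfu : y.1 ≠ x.1 := fun h => hxy (Subtype.ext h)
      obtain ⟨j, hj⟩ := Function.ne_iff.mp hfu
      exact ⟨j, hj⟩
    have hmem := Nat.sInf_mem hne
    have hge : m ≤ sInf {j : ℕ | y.1 j ≠ x.1 j} := by
      by_contra h
      push_neg at h
      exact hmem (hy _ (Finset.mem_range.mpr h))
    have hd : dist' k A y x ≤ (2 : ℝ)⁻¹ ^ m := by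
      unfold dist'
      rw [if_neg hxy]
      exact pow_le_pow_of_le_one (by norm_num) (by norm_num) hge
    calc |φ y - φ x| ≤ C' * dist' k A y x ^ γ := hC' y x
      _ ≤ C' * ((2 : ℝ)⁻¹ ^ m) ^ γ :=
        mul_le_mul_of_nonneg_left
          (Real.rpow_le_rpow (dist'_nonneg k A y x) hd hγ.le) hC'0
      _ = C' * ((2 : ℝ)⁻¹ ^ γ) ^ m := by
        rw [← Real.rpow_natCast ((2 : ℝ)⁻¹) m, ← Real.rpow_natCast ((2 : ℝ)⁻¹ ^ γ) m,
          ← Real.rpow_mul (by norm_num), ← Real.rpow_mul (by norm_num), mul_comm (m : ℝ) γ]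
      _ < ε := hm

end Aux

theorem stmt17 (k : ℕ) (hk : 1 ≤ k) (A : Matrix (Fin k) (Fin k) ℕ)
    (hA : ZeroOne k A) (hAper : Aperiodic k A)
    (xp : Fin k → ShiftSpace k A) (hxp : ∀ j : Fin k, A j ((xp j).1 0) = 1)
    (yp : Fin k → ShiftSpace k A) (hyp : ∀ j : Fin k, A j ((yp j).1 0) = 1)
    (zp : Fin k → ShiftSpace k A) (hzp : ∀ j : Fin k, A j ((zp j).1 0) = 1)
    (hyz : ∀ j : Fin k, yp j ≠ zp j)
    (α : ℝ) (hα : 0 < α) (φ : ShiftSpace k A → ℝ) (hφH : IsHolder k A α φ)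
    (hφpos : ∀ x, 0 < φ x) (hnorm : NormalizedNeg k A φ)
    (f : ShiftSpace k A → ℝ) (hfc : Continuous f) (hf0 : ∀ x, 0 ≤ f x)
    (hfne : ∃ x, f x ≠ 0)
    (β : ℕ ≃ Words k A × Fin 2)
    (hβ : ∀ m n : ℕ, m ≤ n →
      eigval k A xp hxp yp hyp zp hzp φ f (β n) ≤
        eigval k A xp hxp yp hyp zp hzp φ f (β m)) :
    ∃ C : ℝ, ∀ n : ℕ, 2 ≤ n →
      (∑ m ∈ Finset.range n, eigval k A xp hxp yp hyp zp hzp φ f (β m)) ≤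
        C * Real.log n := by
  classical
  set e : Words k A × Fin 2 → ℝ := eigval k A xp hxp yp hyp zp hzp φ f with he
  have hne : Nonempty (ShiftSpace k A) := ⟨xp ⟨0, hk⟩⟩
  -- maximum of f
  obtain ⟨xm, -, hxm⟩ := isCompact_univ.exists_isMaxOn Set.univ_nonempty hfc.continuousOn
  set Mf : ℝ := f xm with hMfdef
  have hMf0 : 0 ≤ Mf := hf0 xm
  have hMfb : ∀ x, f x ≤ Mf := fun x => hxm (Set.mem_univ x)
  -- minimum of φ
  have hφc : Continuous φ := holder_continuous k A hα φ hφH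
  obtain ⟨xc, -, hxc⟩ := isCompact_univ.exists_isMinOn Set.univ_nonempty hφc.continuousOn
  set c : ℝ := φ xc with hcdef
  have hc0 : 0 < c := hφpos xc
  have hcb : ∀ x, c ≤ φ x := fun x => hxc (Set.mem_univ x)
  -- pointwise bounds
  have hE0 : ∀ p : Words k A × Fin 2, 0 ≤ e p := by
    intro p
    apply mul_nonneg
    · split <;> exact hf0 _
    · exact (Real.exp_pos _).le
  have hpt : ∀ p : Words k A × Fin 2,
      e p ≤ Mf * Real.exp (-(birk k A φ (wordLen k A p.1) (wpt k A xp hxp p.1))) := by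
    intro p
    apply mul_le_mul_of_nonneg_right _ (Real.exp_pos _).le
    split <;> exact hMfb _
  have hB1 : ∀ p : Words k A × Fin 2,
      e p ≤ Mf * Real.exp (-(c * (wordLen k A p.1))) := by
    intro p
    refine (hpt p).trans (mul_le_mul_of_nonneg_left ?_ hMf0)
    rw [Real.exp_le_exp, neg_le_neg_iff]
    exact birk_ge k A φ c hcb _ _
  -- level-sum bound via normalization
  have hglue : ∀ n' : ℕ,
      (∑ w : {w : Fin (n' + 1) → Fin k // Allowed k A w},
        Real.exp (-birk k A φ (n' + 1) (wpt k A xp hxp ⟨n', w⟩))) ≤ (k : ℝ) := by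
    intro n'
    have hsplit : ∀ w : {w : Fin (n' + 1) → Fin k // Allowed k A w},
        Real.exp (-birk k A φ (n' + 1) (wpt k A xp hxp ⟨n', w⟩)) =
        ∑ j : Fin k, if j = w.1 (Fin.last n') then
          Real.exp (-birk k A φ (n' + 1) (wpt k A xp hxp ⟨n', w⟩)) else 0 := by
      intro w
      rw [Finset.sum_ite_eq' Finset.univ (w.1 (Fin.last n'))
        (fun _ => Real.exp (-birk k A φ (n' + 1) (wpt k A xp hxp ⟨n', w⟩)))]
      rw [if_pos (Finset.mem_univ _)]
    calc (∑ w : {w : Fin (n' + 1) → Fin k // Allowed k A w},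
          Real.exp (-birk k A φ (n' + 1) (wpt k A xp hxp ⟨n', w⟩)))
        = ∑ w : {w : Fin (n' + 1) → Fin k // Allowed k A w}, ∑ j : Fin k,
            if j = w.1 (Fin.last n') then
              Real.exp (-birk k A φ (n' + 1) (wpt k A xp hxp ⟨n', w⟩)) else 0 :=
          Finset.sum_congr rfl fun w _ => hsplit w
      _ = ∑ j : Fin k, ∑ w : {w : Fin (n' + 1) → Fin k // Allowed k A w},
            if j = w.1 (Fin.last n') then
              Real.exp (-birk k A φ (n' + 1) (wpt k A xp hxp ⟨n', w⟩)) else 0 :=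
          Finset.sum_comm
      _ ≤ ∑ _j : Fin k, (1 : ℝ) := by
          apply Finset.sum_le_sum
          intro j _
          have hds := sum_dite_subtype (fun w : Fin (n' + 1) → Fin k => Allowed k A w)
            (fun w => if j = w.1 (Fin.last n') then
              Real.exp (-birk k A φ (n' + 1) (wpt k A xp hxp ⟨n', w⟩)) else 0)
          rw [← hds, ← wsum_eq_one k A φ hnorm n' (xp j)]
          unfold wsum
          apply Finset.sum_le_sum
          intro w _
          by_cases hal : Allowed k A w
          · rw [dif_pos hal]
            by_cases hj : j = w (Fin.last n')
            · subst hj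
              have hcond : Allowed k A w ∧ A (w (Fin.last n')) ((xp (w (Fin.last n'))).1 0) = 1 :=
                ⟨hal, hxp _⟩
              rw [dif_pos hcond, if_pos rfl]
              exact le_of_eq rfl
            · rw [if_neg hj]
              split
              · exact (Real.exp_pos _).le
              · exact le_rfl
          · rw [dif_neg hal]
            split
            · exact (Real.exp_pos _).le
            · exact le_rfl
      _ = (k : ℝ) := by simp
  set K : ℝ := 2 * (k : ℝ) * Mf with hKdef
  have hK0 : 0 ≤ K := by positivity
  have hlevel : ∀ n' : ℕ,
      (∑ q : {w : Fin (n' + 1) → Fin k // Allowed k A w} × Fin 2,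
        e ((⟨n', q.1⟩ : Words k A), q.2)) ≤ K := by
    intro n'
    rw [Fintype.sum_prod_type]
    have hterm : ∀ w : {w : Fin (n' + 1) → Fin k // Allowed k A w},
        (∑ i : Fin 2, e ((⟨n', w⟩ : Words k A), i)) ≤
          2 * Mf * Real.exp (-birk k A φ (n' + 1) (wpt k A xp hxp ⟨n', w⟩)) := by
      intro w
      rw [Fin.sum_univ_two]
      have h0 := hpt ((⟨n', w⟩ : Words k A), 0)
      have h1 := hpt ((⟨n', w⟩ : Words k A), 1)
      calc e ((⟨n', w⟩ : Words k A), 0) + e ((⟨n', w⟩ : Words k A), 1)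
          ≤ Mf * Real.exp (-birk k A φ (n' + 1) (wpt k A xp hxp ⟨n', w⟩)) +
            Mf * Real.exp (-birk k A φ (n' + 1) (wpt k A xp hxp ⟨n', w⟩)) :=
            add_le_add h0 h1
        _ = 2 * Mf * Real.exp (-birk k A φ (n' + 1) (wpt k A xp hxp ⟨n', w⟩)) := by ring
    calc (∑ w : {w : Fin (n' + 1) → Fin k // Allowed k A w},
          ∑ i : Fin 2, e ((⟨n', w⟩ : Words k A), i))
        ≤ ∑ w : {w : Fin (n' + 1) → Fin k // Allowed k A w},
            2 * Mf * Real.exp (-birk k A φ (n' + 1) (wpt k A xp hxp ⟨n', w⟩)) :=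
          Finset.sum_le_sum fun w _ => hterm w
      _ = 2 * Mf * ∑ w : {w : Fin (n' + 1) → Fin k // Allowed k A w},
            Real.exp (-birk k A φ (n' + 1) (wpt k A xp hxp ⟨n', w⟩)) := by
          rw [Finset.mul_sum]
      _ ≤ 2 * Mf * (k : ℝ) := by
          apply mul_le_mul_of_nonneg_left (hglue n') (by positivity)
      _ = K := by rw [hKdef]; ring
  -- the level finsets
  set levelF : ℕ → Finset (Words k A × Fin 2) := fun n' =>
    Finset.image (fun q : {w : Fin (n' + 1) → Fin k // Allowed k A w} × Fin 2 =>
      ((⟨n', q.1⟩ : Words k A), q.2)) Finset.univ with hlevelF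
  have hmemF : ∀ n' (p : Words k A × Fin 2), p ∈ levelF n' → p.1.1 = n' := by
    intro n' p hp
    rw [hlevelF, Finset.mem_image] at hp
    obtain ⟨q, -, hq⟩ := hp
    rw [← hq]
  have hlevsum : ∀ n', (∑ p ∈ levelF n', e p) ≤ K := by
    intro n'
    rw [hlevelF, Finset.sum_image ?hinj]
    case hinj =>
      intro q _ q' _ hqq
      beta_reduce at hqq
      replace hqq := Prod.mk.inj hqq
      have h1 := hqq.1
      replace h1 := Sigma.mk.inj h1
      exact Prod.ext (eq_of_heq h1.2) hqq.2
    exact hlevel n'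
  -- main estimate
  refine ⟨K / c + (K + Mf) / Real.log 2, ?_⟩
  intro n hn
  have hn0 : (0 : ℝ) < n := by positivity
  have hn1 : (1 : ℝ) ≤ n := by exact_mod_cast Nat.one_le_of_lt hn
  have hlogn0 : 0 ≤ Real.log n := Real.log_nonneg hn1
  set N : ℕ := ⌈Real.log n / c⌉₊ with hNdef
  have hNge : Real.log n / c ≤ (N : ℝ) := Nat.le_ceil _
  have hNlog : Real.log n ≤ c * N := by
    rw [mul_comm]
    exact (div_le_iff₀ hc0).mp hNge
  have hNle : (N : ℝ) ≤ Real.log n / c + 1 :=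
    (Nat.ceil_lt_add_one (by positivity)).le
  -- split the sum
  rw [← Finset.sum_filter_add_sum_filter_not (Finset.range n)
    (fun m => (β m).1.1 < N) (fun m => e (β m))]
  have hlow : (∑ m ∈ (Finset.range n).filter (fun m => (β m).1.1 < N), e (β m)) ≤
      N * K := by
    have himg : (∑ m ∈ (Finset.range n).filter (fun m => (β m).1.1 < N), e (β m)) =
        ∑ p ∈ ((Finset.range n).filter (fun m => (β m).1.1 < N)).image β, e p :=
      (Finset.sum_image (fun a _ b _ hab => β.injective hab)).symm
    rw [himg]
    have hsub : ((Finset.range n).filter (fun m => (β m).1.1 < N)).image β ⊆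
        (Finset.range N).biUnion levelF := by
      intro p hp
      rw [Finset.mem_image] at hp
      obtain ⟨m, hm, hpm⟩ := hp
      rw [Finset.mem_filter] at hm
      rw [Finset.mem_biUnion]
      refine ⟨p.1.1, Finset.mem_range.mpr (by rw [← hpm]; exact hm.2), ?_⟩
      rw [hlevelF, Finset.mem_image]
      exact ⟨(p.1.2, p.2), Finset.mem_univ _, rfl⟩
    calc (∑ p ∈ ((Finset.range n).filter (fun m => (β m).1.1 < N)).image β, e p)
        ≤ ∑ p ∈ (Finset.range N).biUnion levelF, e p :=
          Finset.sum_le_sum_of_subset_of_nonneg hsub (fun p _ _ => hE0 p)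
      _ = ∑ n' ∈ Finset.range N, ∑ p ∈ levelF n', e p := by
          apply Finset.sum_biUnion
          intro a _ b _ hab
          show Disjoint (levelF a) (levelF b)
          rw [Finset.disjoint_left]
          intro p hpa hpb
          exact hab ((hmemF a p hpa).symm.trans (hmemF b p hpb))
      _ ≤ ∑ _n' ∈ Finset.range N, K := Finset.sum_le_sum fun n' _ => hlevsum n'
      _ = N * K := by rw [Finset.sum_const, Finset.card_range, nsmul_eq_mul]
  have hhigh : (∑ m ∈ (Finset.range n).filter (fun m => ¬ (β m).1.1 < N), e (β m)) ≤
      Mf := by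
    have hterm : ∀ m ∈ (Finset.range n).filter (fun m => ¬ (β m).1.1 < N),
        e (β m) ≤ Mf * Real.exp (-(c * N)) := by
      intro m hm
      rw [Finset.mem_filter] at hm
      refine (hB1 (β m)).trans (mul_le_mul_of_nonneg_left ?_ hMf0)
      rw [Real.exp_le_exp, neg_le_neg_iff]
      apply mul_le_mul_of_nonneg_left _ hc0.le
      have : N ≤ wordLen k A (β m).1 := by
        have := hm.2
        unfold wordLen
        omega
      exact_mod_cast this
    calc (∑ m ∈ (Finset.range n).filter (fun m => ¬ (β m).1.1 < N), e (β m))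
        ≤ ∑ _m ∈ (Finset.range n).filter (fun m => ¬ (β m).1.1 < N),
            Mf * Real.exp (-(c * N)) := Finset.sum_le_sum hterm
      _ = ((Finset.range n).filter (fun m => ¬ (β m).1.1 < N)).card *
            (Mf * Real.exp (-(c * N))) := by
          rw [Finset.sum_const, nsmul_eq_mul]
      _ ≤ n * (Mf * Real.exp (-(c * N))) := by
          apply mul_le_mul_of_nonneg_right _ (by positivity)
          have hcard := Finset.card_filter_le (Finset.range n)
            (fun m => ¬ (β m).1.1 < N)
          rw [Finset.card_range] at hcard
          exact_mod_cast hcard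
      _ ≤ n * (Mf * ((n : ℝ)⁻¹)) := by
          apply mul_le_mul_of_nonneg_left _ hn0.le
          apply mul_le_mul_of_nonneg_left _ hMf0
          have : Real.exp (-(c * N)) ≤ Real.exp (-Real.log n) := by
            rw [Real.exp_le_exp, neg_le_neg_iff]
            exact hNlog
          have h2 : Real.exp (-Real.log n) = (n : ℝ)⁻¹ := by
            rw [Real.exp_neg, Real.exp_log hn0]
          exact this.trans (le_of_eq h2)
      _ = Mf := by field_simp
  have hlog2 : 0 < Real.log 2 := Real.log_pos (by norm_num)
  have hlog2n : Real.log 2 ≤ Real.log n := by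
    apply Real.log_le_log (by norm_num)
    exact_mod_cast hn
  calc (∑ m ∈ (Finset.range n).filter (fun m => (β m).1.1 < N), e (β m)) +
        (∑ m ∈ (Finset.range n).filter (fun m => ¬ (β m).1.1 < N), e (β m))
      ≤ N * K + Mf := add_le_add hlow hhigh
    _ ≤ (Real.log n / c + 1) * K + Mf :=
        add_le_add_left (mul_le_mul_of_nonneg_right hNle hK0) _
    _ = K / c * Real.log n + (K + Mf) := by field_simp; ring
    _ ≤ K / c * Real.log n + (K + Mf) / Real.log 2 * Real.log n := by
        apply add_le_add_right
        calc K + Mf = (K + Mf) / Real.log 2 * Real.log 2 := by field_simp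
          _ ≤ (K + Mf) / Real.log 2 * Real.log n := by
              apply mul_le_mul_of_nonneg_left hlog2n (by positivity)
    _ = (K / c + (K + Mf) / Real.log 2) * Real.log n := by ring

end SpectralGibbs
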